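/- Let F : ℝ^d → ℝ^d be C¹, f ∈ L²(0,T;ℝ^d), g ∈ ℝ^d, and let y_*^h be a minimizer of J(·;F,f,g) over a piecewise linear finite element space X^h. Let w_*[y_*^h](t) = g + ∫₀ᵗ (F(y_*^h(s)) + f(s)) ds and define Γ(t;v^h) = ∫₀ᵗ DF(y_*^h(s)) v^h(s) ds for t ∈ [0,T]. Then the orthogonality identity ⟨y_*^h − w_*[y_*^h], v^h − Γ(·;v^h)⟩_X = 0 holds for every v^h ∈ X^h. -/

import Mathlib

open MeasureTheory Set
open scoped RealInnerProductSpace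

noncomputable section

/-- `ℝ^d`. -/
abbrev Euc (d : ℕ) := EuclideanSpace ℝ (Fin d)

/-- `(u, u')` represents an element of `X = H¹(0,T;ℝ^d)`: `u` is absolutely continuous
(equal to the integral of its a.e. derivative `u'`) and `u' ∈ L²(0,T;ℝ^d)`. -/
def MemX {d : ℕ} (T : ℝ) (u u' : ℝ → Euc d) : Prop :=
  MemLp u' 2 (volume.restrict (Icc (0:ℝ) T)) ∧
  ∀ t ∈ Icc (0:ℝ) T, u t = u 0 + ∫ s in (0:ℝ)..t, u' s

/-- The inner product `⟨·,·⟩_X` on `X`. -/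
def innerX {d : ℕ} (T : ℝ) (u u' v v' : ℝ → Euc d) : ℝ :=
  (∫ t in (0:ℝ)..T, ⟪u' t, v' t⟫) + ⟪u 0, v 0⟫

/-- The energy norm `‖·‖_X` on `X`. -/
def normX {d : ℕ} (T : ℝ) (u u' : ℝ → Euc d) : ℝ :=
  Real.sqrt (innerX T u u' u u')

/-- The `L²(0,T;ℝ^d)` norm. -/
def L2norm {d : ℕ} (T : ℝ) (w : ℝ → Euc d) : ℝ :=
  Real.sqrt (∫ t in (0:ℝ)..T, ‖w t‖ ^ 2)

/-- The least-squares objective `J(y; F, f, g)`. -/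
def Jfun {d : ℕ} (T : ℝ) (F : Euc d → Euc d) (f : ℝ → Euc d) (g : Euc d)
    (y y' : ℝ → Euc d) : ℝ :=
  (1/2) * (∫ t in (0:ℝ)..T, ‖y' t - F (y t) - f t‖ ^ 2) + (1/2) * ‖y 0 - g‖ ^ 2

/-- A partition `0 = τ₀ < τ₁ < ⋯ < τ_N = T` of `[0,T]`. -/
structure TimePartition (T : ℝ) where
  N : ℕ
  τ : ℕ → ℝ
  hN : 0 < N
  left : τ 0 = 0
  right : τ N = T
  mono : ∀ i < N, τ i < τ (i + 1)

/-- The mesh size `h = max_i (τ_{i+1} - τ_i)` of a partition. -/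
def TimePartition.mesh {T : ℝ} (P : TimePartition T) : ℝ :=
  (Finset.range P.N).sup' (Finset.nonempty_range_iff.mpr P.hN.ne') fun i => P.τ (i + 1) - P.τ i

/-- `v` is (on `[0,T]`) piecewise affine w.r.t. the partition `P`,
i.e. `v` belongs to the piecewise linear finite element space `X^h`. -/
def PWLinear {d : ℕ} {T : ℝ} (P : TimePartition T) (v : ℝ → Euc d) : Prop :=
  ∀ i < P.N, ∃ a b : Euc d, ∀ t ∈ Icc (P.τ i) (P.τ (i + 1)), v t = a + t • b

/-- `(p, p')` is the orthogonal projection `Π_h (u,u')` of `(u, u') ∈ X` onto the piecewise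
linear finite element space `X^h` attached to the partition `P`. -/
def IsProjX {d : ℕ} {T : ℝ} (P : TimePartition T) (u u' p p' : ℝ → Euc d) : Prop :=
  MemX T p p' ∧ PWLinear P p ∧
  ∀ v v' : ℝ → Euc d, MemX T v v' → PWLinear P v →
    innerX T (fun t => u t - p t) (fun t => u' t - p' t) v v' = 0

/-- `(y, y')` is a strong solution of the IVP `y' = F(y) + f(t)`, `y(0) = g`. -/
def IsStrongSol {d : ℕ} (T : ℝ) (F : Euc d → Euc d) (f : ℝ → Euc d) (g : Euc d)
    (y y' : ℝ → Euc d) : Prop :=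
  MemX T y y' ∧ y 0 = g ∧ ∀ᵐ t ∂(volume.restrict (Ioc (0:ℝ) T)), y' t = F (y t) + f t

/-- `(y, y')` is an lsfem solution: a global minimizer of `J(·;F,f,g)` over `X^h`. -/
def IsLSFEMSol {d : ℕ} (T : ℝ) (F : Euc d → Euc d) (f : ℝ → Euc d) (g : Euc d)
    (P : TimePartition T) (y y' : ℝ → Euc d) : Prop :=
  MemX T y y' ∧ PWLinear P y ∧
  ∀ z z' : ℝ → Euc d, MemX T z z' → PWLinear P z →
    Jfun T F f g y y' ≤ Jfun T F f g z z'

/-- `c` is the smallest constant with `max_{t∈[0,T]} ‖u(t)‖ ≤ c ‖u‖_X` for all `u ∈ X`. -/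
def IsEmbC (d : ℕ) (T : ℝ) (c : ℝ) : Prop :=
  IsLeast {a : ℝ | ∀ u u' : ℝ → Euc d, MemX T u u' →
    ∀ t ∈ Icc (0:ℝ) T, ‖u t‖ ≤ a * normX T u u'} c

/-- `c` is the smallest constant with `‖u‖_{L²} ≤ c ‖u‖_X` for all `u ∈ X`. -/
def IsEmbL2 (d : ℕ) (T : ℝ) (c : ℝ) : Prop :=
  IsLeast {a : ℝ | ∀ u u' : ℝ → Euc d, MemX T u u' → L2norm T u ≤ a * normX T u u'} c

/-- The smallness bound `1/√(2T² + T + c² + √((2T² + T + c²)² + 2Tc²(1+2T)))` from (A2). -/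
def A2bound (T c : ℝ) : ℝ :=
  1 / Real.sqrt (2*T^2 + T + c^2 + Real.sqrt ((2*T^2 + T + c^2)^2 + 2*T*c^2*(1+2*T)))

section Helpers

variable {d : ℕ} {T : ℝ}

lemma isFiniteRestrictIcc (T : ℝ) : IsFiniteMeasure (volume.restrict (Icc (0:ℝ) T)) :=
  ⟨by rw [Measure.restrict_apply_univ]; exact measure_Icc_lt_top⟩

lemma isFiniteRestrictIoc (T : ℝ) : IsFiniteMeasure (volume.restrict (Ioc (0:ℝ) T)) :=
  ⟨by rw [Measure.restrict_apply_univ]; exact measure_Ioc_lt_top⟩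

lemma MemX.integrableOn' {u u' : ℝ → Euc d} (h : MemX T u u') :
    IntegrableOn u' (Icc (0:ℝ) T) := by
  haveI := isFiniteRestrictIcc T
  exact h.1.integrable one_le_two

lemma MemX.intervalIntegrable' {u u' : ℝ → Euc d} (h : MemX T u u')
    {t : ℝ} (ht : t ∈ Icc (0:ℝ) T) : IntervalIntegrable u' volume 0 t :=
  (intervalIntegrable_iff_integrableOn_Ioc_of_le ht.1).2
    (h.integrableOn'.mono_set fun s hs => ⟨hs.1.le, hs.2.trans ht.2⟩)

lemma MemX.continuousOn' (hT : 0 ≤ T) {u u' : ℝ → Euc d} (h : MemX T u u') :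
    ContinuousOn u (Icc (0:ℝ) T) := by
  have hc : ContinuousOn (fun t => u 0 + ∫ s in Ioc (0:ℝ) t, u' s) (Icc (0:ℝ) T) :=
    continuousOn_const.add (intervalIntegral.continuousOn_primitive h.integrableOn')
  refine hc.congr fun t ht => ?_
  rw [h.2 t ht, intervalIntegral.integral_of_le ht.1]

lemma MemX.exists_bound' (hT : 0 ≤ T) {u u' : ℝ → Euc d} (h : MemX T u u') :
    ∃ M : ℝ, 0 ≤ M ∧ ∀ t ∈ Icc (0:ℝ) T, ‖u t‖ ≤ M := by
  obtain ⟨M, hM⟩ := isCompact_Icc.exists_bound_of_continuousOn (h.continuousOn' hT)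
  exact ⟨M, le_trans (norm_nonneg _) (hM 0 ⟨le_refl 0, hT⟩), hM⟩

lemma MemX.add_smul' {y y' v v' : ℝ → Euc d} (hy : MemX T y y') (hv : MemX T v v') (ε : ℝ) :
    MemX T (fun t => y t + ε • v t) (fun t => y' t + ε • v' t) := by
  refine ⟨hy.1.add (hv.1.const_smul ε), fun t ht => ?_⟩
  have iy := hy.intervalIntegrable' ht
  have iv := hv.intervalIntegrable' ht
  show y t + ε • v t = (y 0 + ε • v 0) + ∫ s in (0:ℝ)..t, (y' s + ε • v' s)
  have hi2 : (∫ s in (0:ℝ)..t, (y' s + ε • v' s))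
      = (∫ s in (0:ℝ)..t, y' s) + ε • ∫ s in (0:ℝ)..t, v' s := by
    have h3 := intervalIntegral.integral_add iy (iv.smul ε)
    simpa [intervalIntegral.integral_smul] using h3
  rw [hy.2 t ht, hv.2 t ht, hi2, smul_add]
  abel

lemma PWLinear.add_smul' {P : TimePartition T} {y v : ℝ → Euc d}
    (hy : PWLinear P y) (hv : PWLinear P v) (ε : ℝ) :
    PWLinear P (fun t => y t + ε • v t) := by
  intro i hi
  obtain ⟨a, b, hab⟩ := hy i hi
  obtain ⟨c, e, hce⟩ := hv i hi
  refine ⟨a + ε • c, b + ε • e, fun t ht => ?_⟩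
  show y t + ε • v t = (a + ε • c) + t • (b + ε • e)
  rw [hab t ht, hce t ht]
  module

lemma hasDerivAt_norm_sq' {E : Type*} [NormedAddCommGroup E] [InnerProductSpace ℝ E]
    {ψ : ℝ → E} {η : E} {x : ℝ} (h : HasDerivAt ψ η x) :
    HasDerivAt (fun s => ‖ψ s‖ ^ 2) (2 * ⟪ψ x, η⟫) x := by
  have h2 := HasDerivAt.inner ℝ h h
  have hval : (⟪ψ x, η⟫ + ⟪η, ψ x⟫ : ℝ) = 2 * ⟪ψ x, η⟫ := by
    rw [real_inner_comm η (ψ x)]; ring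
  rw [hval] at h2
  simpa only [real_inner_self_eq_norm_sq] using h2

end Helpers

set_option maxHeartbeats 1600000

/-- Lemma 3.3 (geometric orthogonality property): for any lsfem solution `y_*^h` of the
nonlinear problem, with `w_*[y_*^h](t) = g + ∫₀ᵗ (F(y_*^h(s)) + f(s)) ds` and
`Γ(t;v^h) = ∫₀ᵗ DF(y_*^h(s)) v^h(s) ds`, one has
`⟨y_*^h − w_*[y_*^h], v^h − Γ(·;v^h)⟩_X = 0` for all `v^h ∈ X^h`. -/
theorem lsfem_orthogonality_identity
    {d : ℕ} {T : ℝ} (hT : 0 < T)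
    (F : Euc d → Euc d) (hF : ContDiff ℝ 1 F)
    (f : ℝ → Euc d) (hf : MemLp f 2 (volume.restrict (Icc (0:ℝ) T)))
    (g : Euc d)
    (P : TimePartition T) (yh yh' : ℝ → Euc d)
    (hyh : IsLSFEMSol T F f g P yh yh') :
    ∀ v v' : ℝ → Euc d, MemX T v v' → PWLinear P v →
      innerX T
        (fun t => yh t - (g + ∫ s in (0:ℝ)..t, (F (yh s) + f s)))
        (fun t => yh' t - (F (yh t) + f t))
        (fun t => v t - ∫ s in (0:ℝ)..t, fderiv ℝ F (yh s) (v s))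
        (fun t => v' t - fderiv ℝ F (yh t) (v t)) = 0 := by
  intro v v' hv hvP
  obtain ⟨hy, hyP, hymin⟩ := hyh
  haveI := isFiniteRestrictIcc T
  haveI := isFiniteRestrictIoc T
  set μ : Measure ℝ := volume.restrict (Ioc (0:ℝ) T) with hμ
  have hle : μ ≤ volume.restrict (Icc (0:ℝ) T) :=
    Measure.restrict_mono Ioc_subset_Icc_self le_rfl
  -- measurability and integrability of the data on `(0,T]`
  have hy2 : MemLp yh' 2 μ := hy.1.mono_measure hle
  have hv2 : MemLp v' 2 μ := hv.1.mono_measure hle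
  have hf2 : MemLp f 2 μ := hf.mono_measure hle
  have my : AEStronglyMeasurable yh μ :=
    ((hy.continuousOn' hT.le).mono Ioc_subset_Icc_self).aestronglyMeasurable measurableSet_Ioc
  have mv : AEStronglyMeasurable v μ :=
    ((hv.continuousOn' hT.le).mono Ioc_subset_Icc_self).aestronglyMeasurable measurableSet_Ioc
  -- uniform bounds
  obtain ⟨My, hMy0, hMy⟩ := hy.exists_bound' hT.le
  obtain ⟨Mv, hMv0, hMv⟩ := hv.exists_bound' hT.le
  set K : Set (Euc d) := Metric.closedBall 0 (My + Mv) with hK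
  have hKc : IsCompact K := isCompact_closedBall _ _
  obtain ⟨MF, hMF⟩ := hKc.exists_bound_of_continuousOn hF.continuous.continuousOn
  obtain ⟨MD, hMD⟩ := hKc.exists_bound_of_continuousOn
    (hF.continuous_fderiv one_ne_zero).continuousOn
  have h0K : (0 : Euc d) ∈ K := by
    simp [hK, Metric.mem_closedBall]; positivity
  have hMF0 : 0 ≤ MF := le_trans (norm_nonneg _) (hMF 0 h0K)
  have hMD0 : 0 ≤ MD := le_trans (norm_nonneg _) (hMD 0 h0K)
  have hmemK : ∀ (x : ℝ), |x| ≤ 1 → ∀ t ∈ Icc (0:ℝ) T, yh t + x • v t ∈ K := by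
    intro x hx t ht
    rw [hK, mem_closedBall_zero_iff]
    calc ‖yh t + x • v t‖ ≤ ‖yh t‖ + ‖x • v t‖ := norm_add_le _ _
      _ ≤ My + Mv := by
          rw [norm_smul, Real.norm_eq_abs]
          have h1 := hMy t ht
          have h2 := hMv t ht
          nlinarith [norm_nonneg (v t), abs_nonneg x]
  -- the parametric integrand and its derivative
  set G : ℝ → ℝ → ℝ :=
    fun x t => ‖yh' t + x • v' t - F (yh t + x • v t) - f t‖ ^ 2 with hG
  set G' : ℝ → ℝ → ℝ := fun x t =>
    2 * ⟪yh' t + x • v' t - F (yh t + x • v t) - f t,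
        v' t - fderiv ℝ F (yh t + x • v t) (v t)⟫ with hG'
  have hG_deriv : ∀ (x : ℝ) (t : ℝ), HasDerivAt (fun z => G z t) (G' x t) x := by
    intro x t
    have h1 : HasDerivAt (fun z : ℝ => yh t + z • v t) (v t) x := by
      simpa using ((hasDerivAt_id x).smul_const (v t)).const_add (yh t)
    have h2 : HasDerivAt (fun z : ℝ => F (yh t + z • v t))
        (fderiv ℝ F (yh t + x • v t) (v t)) x :=
      ((hF.differentiable one_ne_zero _).hasFDerivAt.comp_hasDerivAt x h1)
    have h3 : HasDerivAt (fun z : ℝ => yh' t + z • v' t - F (yh t + z • v t) - f t)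
        (v' t - fderiv ℝ F (yh t + x • v t) (v t)) x := by
      have h4 : HasDerivAt (fun z : ℝ => yh' t + z • v' t) (v' t) x := by
        simpa using ((hasDerivAt_id x).smul_const (v' t)).const_add (yh' t)
      simpa using (h4.sub h2).sub_const (f t)
    exact hasDerivAt_norm_sq' h3
  -- measurability of the integrands
  have mG : ∀ x : ℝ, AEStronglyMeasurable (G x) μ := by
    intro x
    have hin : AEStronglyMeasurable (fun t => yh' t + x • v' t - F (yh t + x • v t) - f t) μ :=
      ((hy2.1.add (hv2.1.const_smul x)).sub
        (hF.continuous.comp_aestronglyMeasurable (my.add (mv.const_smul x)))).sub hf2.1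
    exact (continuous_pow 2).comp_aestronglyMeasurable hin.norm
  have mDFv : AEStronglyMeasurable (fun t => fderiv ℝ F (yh t + (0:ℝ) • v t) (v t)) μ := by
    have hb : Continuous fun p : (Euc d →L[ℝ] Euc d) × Euc d => p.1 p.2 :=
      isBoundedBilinearMap_apply.continuous
    exact hb.comp_aestronglyMeasurable
      (((hF.continuous_fderiv one_ne_zero).comp_aestronglyMeasurable
        (my.add (mv.const_smul (0:ℝ)))).prodMk mv)
  have mG' : AEStronglyMeasurable (G' 0) μ := by
    have hin : AEStronglyMeasurable (fun t => yh' t + (0:ℝ) • v' t - F (yh t + (0:ℝ) • v t) - f t) μ :=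
      ((hy2.1.add (hv2.1.const_smul (0:ℝ))).sub
        (hF.continuous.comp_aestronglyMeasurable (my.add (mv.const_smul (0:ℝ))))).sub hf2.1
    exact (AEStronglyMeasurable.inner hin ((hv2.1).sub mDFv)).const_mul 2
  -- integrability of `G 0`
  have hFyh : MemLp (fun t => F (yh t + (0:ℝ) • v t)) 2 μ := by
    refine MemLp.of_bound
      (hF.continuous.comp_aestronglyMeasurable (my.add (mv.const_smul (0:ℝ)))) MF ?_
    filter_upwards [ae_restrict_mem measurableSet_Ioc] with t ht
    exact hMF _ (hmemK 0 (by simp) t (Ioc_subset_Icc_self ht))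
  have hψ0 : MemLp (fun t => yh' t + (0:ℝ) • v' t - F (yh t + (0:ℝ) • v t) - f t) 2 μ :=
    ((hy2.add (hv2.const_smul (0:ℝ))).sub hFyh).sub hf2
  have hG0int : IntervalIntegrable (G 0) volume 0 T := by
    refine (intervalIntegrable_iff_integrableOn_Ioc_of_le hT.le).2 ?_
    exact (memLp_two_iff_integrable_sq_norm hψ0.1).1 hψ0
  -- the dominating function
  set H : ℝ → ℝ := fun t => ‖yh' t‖ + ‖v' t‖ + MF + ‖f t‖ + (‖v' t‖ + MD * Mv) with hH
  have mH : MemLp H 2 μ :=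
    ((((hy2.norm.add hv2.norm).add (memLp_const MF)).add hf2.norm)).add
      (hv2.norm.add (memLp_const (MD * Mv)))
  have hbound_int : IntervalIntegrable (fun t => H t ^ 2) volume 0 T :=
    (intervalIntegrable_iff_integrableOn_Ioc_of_le hT.le).2 mH.integrable_sq
  have hIoc : Set.uIoc (0:ℝ) T = Ioc (0:ℝ) T := uIoc_of_le hT.le
  -- the bound on the derivative
  have h_bound : ∀ᵐ t ∂(volume : Measure ℝ), t ∈ Set.uIoc (0:ℝ) T →
      ∀ x ∈ Metric.ball (0:ℝ) 1, ‖G' x t‖ ≤ H t ^ 2 := by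
    refine Filter.Eventually.of_forall fun t ht x hx => ?_
    rw [hIoc] at ht
    have htI : t ∈ Icc (0:ℝ) T := Ioc_subset_Icc_self ht
    have hx1 : |x| ≤ 1 := by
      have := mem_ball_zero_iff.1 hx
      rw [Real.norm_eq_abs] at this; linarith
    have hwK := hmemK x hx1 t htI
    set ψ := yh' t + x • v' t - F (yh t + x • v t) - f t with hψdef
    set η := v' t - fderiv ℝ F (yh t + x • v t) (v t) with hηdef
    have ha : ‖ψ‖ ≤ ‖yh' t‖ + ‖v' t‖ + MF + ‖f t‖ := by
      have h1 : ‖ψ‖ ≤ ‖yh' t + x • v' t - F (yh t + x • v t)‖ + ‖f t‖ := norm_sub_le _ _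
      have h2 : ‖yh' t + x • v' t - F (yh t + x • v t)‖
          ≤ ‖yh' t + x • v' t‖ + ‖F (yh t + x • v t)‖ := norm_sub_le _ _
      have h3 : ‖yh' t + x • v' t‖ ≤ ‖yh' t‖ + |x| * ‖v' t‖ := by
        refine (norm_add_le _ _).trans ?_
        rw [norm_smul, Real.norm_eq_abs]
      have h4 := hMF _ hwK
      nlinarith [norm_nonneg (v' t), abs_nonneg x]
    have hb : ‖η‖ ≤ ‖v' t‖ + MD * Mv := by
      have h1 : ‖η‖ ≤ ‖v' t‖ + ‖fderiv ℝ F (yh t + x • v t) (v t)‖ := norm_sub_le _ _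
      have h2 : ‖fderiv ℝ F (yh t + x • v t) (v t)‖
          ≤ ‖fderiv ℝ F (yh t + x • v t)‖ * ‖v t‖ := ContinuousLinearMap.le_opNorm _ _
      have h3 := hMD _ hwK
      have h4 := hMv t htI
      nlinarith [norm_nonneg (v t), norm_nonneg (fderiv ℝ F (yh t + x • v t))]
    have hip : |(⟪ψ, η⟫ : ℝ)| ≤ ‖ψ‖ * ‖η‖ := abs_real_inner_le_norm _ _
    have : ‖G' x t‖ = 2 * |(⟪ψ, η⟫ : ℝ)| := by
      rw [hG', Real.norm_eq_abs, abs_mul, abs_two]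
    rw [this]
    show 2 * |(⟪ψ, η⟫ : ℝ)|
      ≤ (‖yh' t‖ + ‖v' t‖ + MF + ‖f t‖ + (‖v' t‖ + MD * Mv)) ^ 2
    have hA1 : (0:ℝ) ≤ ‖yh' t‖ + ‖v' t‖ + MF + ‖f t‖ := le_trans (norm_nonneg ψ) ha
    have h2ab : ‖ψ‖ * ‖η‖ ≤ (‖yh' t‖ + ‖v' t‖ + MF + ‖f t‖) * (‖v' t‖ + MD * Mv) :=
      mul_le_mul ha hb (norm_nonneg η) hA1
    nlinarith [sq_nonneg ((‖yh' t‖ + ‖v' t‖ + MF + ‖f t‖) - (‖v' t‖ + MD * Mv))]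
  -- differentiate under the integral sign
  have hmeas : ∀ᶠ x in nhds (0:ℝ), AEStronglyMeasurable (G x) (volume.restrict (Set.uIoc (0:ℝ) T)) := by
    refine Filter.Eventually.of_forall fun x => ?_
    rw [hIoc]; exact mG x
  have mG'u : AEStronglyMeasurable (G' 0) (volume.restrict (Set.uIoc (0:ℝ) T)) := by
    rw [hIoc]; exact mG'
  have h_diff : ∀ᵐ t ∂(volume : Measure ℝ), t ∈ Set.uIoc (0:ℝ) T →
      ∀ x ∈ Metric.ball (0:ℝ) 1, HasDerivAt (fun z => G z t) (G' x t) x :=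
    Filter.Eventually.of_forall fun t _ x _ => hG_deriv x t
  have key := (intervalIntegral.hasDerivAt_integral_of_dominated_loc_of_deriv_le
    (F := G) (F' := G') (x₀ := (0:ℝ)) (bound := fun t => H t ^ 2)
    (Metric.ball_mem_nhds 0 one_pos) hmeas hG0int mG'u h_bound hbound_int h_diff).2
  -- derivative of the endpoint term
  have hend : HasDerivAt (fun x : ℝ => ‖yh 0 + x • v 0 - g‖ ^ 2)
      (2 * ⟪yh 0 - g, v 0⟫) 0 := by
    have h1 : HasDerivAt (fun x : ℝ => yh 0 + x • v 0 - g) (v 0) 0 := by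
      simpa using (((hasDerivAt_id (0:ℝ)).smul_const (v 0)).const_add (yh 0)).sub_const g
    have := hasDerivAt_norm_sq' h1
    simpa using this
  -- the function ε ↦ J(yh + ε v)
  set φ : ℝ → ℝ := fun ε =>
    Jfun T F f g (fun t => yh t + ε • v t) (fun t => yh' t + ε • v' t) with hφ
  have hφeq : φ = fun ε => 1/2 * (∫ t in (0:ℝ)..T, G ε t) + 1/2 * ‖yh 0 + ε • v 0 - g‖ ^ 2 :=
    rfl
  have hφder : HasDerivAt φ
      (1/2 * (∫ t in (0:ℝ)..T, G' 0 t) + 1/2 * (2 * ⟪yh 0 - g, v 0⟫)) 0 := by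
    rw [hφeq]
    exact (key.const_mul (1/2)).add (hend.const_mul (1/2))
  have hφmin : ∀ ε : ℝ, φ 0 ≤ φ ε := by
    intro ε
    have h00 : φ 0 = Jfun T F f g yh yh' := by
      rw [hφ]; simp only [zero_smul, add_zero]
    rw [h00]
    exact hymin _ _ (hy.add_smul' hv ε) (hyP.add_smul' hvP ε)
  have hloc : IsLocalMin φ 0 := Filter.Eventually.of_forall hφmin
  have hzero := hloc.hasDerivAt_eq_zero hφder
  -- conclude
  have hG'0 : (∫ t in (0:ℝ)..T, G' 0 t)
      = 2 * ∫ t in (0:ℝ)..T,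
          ⟪yh' t - (F (yh t) + f t), v' t - fderiv ℝ F (yh t) (v t)⟫ := by
    rw [← intervalIntegral.integral_const_mul]
    refine intervalIntegral.integral_congr fun t _ => ?_
    rw [hG']
    simp only [zero_smul, add_zero, sub_sub]
  rw [hG'0] at hzero
  show (∫ t in (0:ℝ)..T,
      ⟪yh' t - (F (yh t) + f t), v' t - fderiv ℝ F (yh t) (v t)⟫)
    + ⟪yh 0 - (g + ∫ s in (0:ℝ)..(0:ℝ), (F (yh s) + f s)),
        v 0 - ∫ s in (0:ℝ)..(0:ℝ), fderiv ℝ F (yh s) (v s)⟫ = 0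
  rw [intervalIntegral.integral_same, intervalIntegral.integral_same, add_zero, sub_zero]
  linarith
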